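/- arXiv:1307.7920 — 9 statements merged into one kernel-verified Lean document; each statement's English description precedes it below -/
import Mathlib

section
/- Let n = pq be a Frobenius pseudoprime with parameters (a,b,c), where p is an odd prime with Jacobi symbol J(c/p) = -1 and z = a+b√c is a unit modulo p. Then z^{q-1} ≡ 1 (mod p) in ℤ[√c]. -/
/-- `n` is a Frobenius pseudoprime with parameters `(a, b, c)`:
a composite odd non-square natural number, coprime to `a*b*c`, with `c`
squarefree, Jacobi symbol `J(c/n) = -1`, satisfying
`(a + b√c)^n ≡ a - b√c (mod n)` in `ℤ[√c]`. -/
def IsFPP (a b c : ℤ) (n : ℕ) : Prop :=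
  1 < n ∧ ¬ n.Prime ∧ Odd n ∧ ¬ IsSquare n ∧
  IsCoprime (a * b * c) (n : ℤ) ∧ Squarefree c ∧ jacobiSym c n = -1 ∧
  (n : Zsqrtd c) ∣ ((⟨a, b⟩ : Zsqrtd c) ^ n - star (⟨a, b⟩ : Zsqrtd c))

/-- Theorem 1(a): if n = pq is an FPP with parameters (a,b,c), p an odd prime with
J(c/p) = -1 and z = a+b√c a unit mod p, then z^(q-1) ≡ 1 (mod p). -/
theorem stmt_3 (a b c : ℤ) (n p q : ℕ) (hn : IsFPP a b c n) (hpq : n = p * q)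
    (hp : p.Prime) (hodd : Odd p) (hJ : jacobiSym c p = -1)
    (hu : IsUnit (Ideal.Quotient.mk (Ideal.span {(p : Zsqrtd c)}) (⟨a, b⟩ : Zsqrtd c))) :
    (p : Zsqrtd c) ∣ ((⟨a, b⟩ : Zsqrtd c) ^ (q - 1) - 1) := by
  classical
  haveI : Fact p.Prime := ⟨hp⟩
  obtain ⟨hn1, -, -, -, -, -, -, hdvd⟩ := hn
  set z : Zsqrtd c := ⟨a, b⟩ with hz
  set I : Ideal (Zsqrtd c) := Ideal.span {(p : Zsqrtd c)} with hI
  set f := Ideal.Quotient.mk I with hf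
  set R := Zsqrtd c ⧸ I
  -- The quotient has characteristic p
  have hcast : ∀ x : ℤ, (p : Zsqrtd c) ∣ (x : Zsqrtd c) ↔ (p : ℤ) ∣ x := by
    intro x
    have : ((p : ℕ) : Zsqrtd c) = ((p : ℤ) : Zsqrtd c) := by push_cast; rfl
    rw [this, Zsqrtd.intCast_dvd_intCast]
  haveI hchar : CharP R p := by
    constructor
    intro x
    rw [← map_natCast f x, hf, Ideal.Quotient.eq_zero_iff_mem, hI,
      Ideal.mem_span_singleton]
    have : ((x : ℕ) : Zsqrtd c) = ((x : ℤ) : Zsqrtd c) := by push_cast; rfl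
    rw [this, hcast]
    exact_mod_cast Iff.rfl
  set g : ZMod p →+* R := ZMod.castHom dvd_rfl R with hg
  have hint : ∀ x : ℤ, ((x : R)) = g ((x : ZMod p)) := fun x => (map_intCast g x).symm
  -- Fermat for integer casts
  have hfermat : ∀ x : ℤ, (x : R) ^ p = (x : R) := by
    intro x
    rw [hint, ← map_pow, ZMod.pow_card]
  -- Euler's criterion: c^(p/2) = -1 in R
  have heuler : ((c : R)) ^ (p / 2) = -1 := by
    have h2 : legendreSym p c = -1 := by
      rw [jacobiSym.legendreSym.to_jacobiSym]; exact hJ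
    have h1 : ((c : ZMod p)) ^ (p / 2) = -1 := by
      rw [← legendreSym.eq_pow, h2]; norm_num
    rw [hint, ← map_pow, h1]
    simp
  -- the square root of c in R
  set s : R := f Zsqrtd.sqrtd with hs
  have hs2 : s * s = (c : R) := by
    rw [hs, ← map_mul, Zsqrtd.dmuld]
    simp [hf]
  have hsp : s ^ p = -s := by
    obtain ⟨k, hk⟩ := hodd
    have h5 : s ^ p = (s * s) ^ k * s := by
      rw [hk, ← sq, ← pow_mul, ← pow_succ]
    rw [h5, hs2, show k = p / 2 from by omega, heuler]
    ring
  -- Frobenius: f w ^ p = f (star w) for all w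
  have key : ∀ w : Zsqrtd c, f w ^ p = f (star w) := by
    intro w
    obtain ⟨x, y⟩ := w
    rw [Zsqrtd.star_mk, Zsqrtd.decompose, Zsqrtd.decompose (x := x) (y := -y)]
    simp only [map_add, map_mul, map_intCast]
    rw [add_pow_char, mul_pow, hfermat, ← hs, hsp, hfermat]
    push_cast
    ring
  -- q ≥ 1
  have hq1 : 1 ≤ q := by
    rcases Nat.eq_zero_or_pos q with h | h
    · subst h; omega
    · exact h
  -- main congruence: f (star z) ^ q = f (star z)
  have hmod : f (star z) ^ q = f (star z) := by
    have h0 : f (z ^ n) = f (star z) := by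
      rw [hf, Ideal.Quotient.mk_eq_mk_iff_sub_mem, hI, Ideal.mem_span_singleton]
      refine dvd_trans ?_ hdvd
      rw [hpq]
      push_cast
      exact Dvd.intro _ rfl
    calc f (star z) ^ q = f ((star z) ^ q) := by rw [map_pow]
      _ = f (star (z ^ q)) := by rw [star_pow]
      _ = f (z ^ q) ^ p := (key _).symm
      _ = f (z ^ (p * q)) := by rw [← map_pow, ← pow_mul, mul_comm q p]
      _ = f (star z) := by rw [← hpq]; exact h0
  -- f (star z) is a unit
  have hu' : IsUnit (f (star z)) := by
    rw [← key z]
    exact hu.pow p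
  -- cancel to get f (star z) ^ (q - 1) = 1
  have hone : f (star z) ^ (q - 1) = 1 := by
    obtain ⟨u, hu2⟩ := hu'
    have hunits : u ^ q = u := Units.ext (by rw [Units.val_pow_eq_pow_val, hu2, hmod])
    have h3 : u ^ (q - 1) * u = 1 * u := by
      rw [← pow_succ, Nat.sub_add_cancel hq1, hunits, one_mul]
    have h4 : u ^ (q - 1) = 1 := mul_right_cancel h3
    rw [← hu2, ← Units.val_pow_eq_pow_val, h4, Units.val_one]
  -- back to divisibility: p ∣ (star z)^(q-1) - 1
  have hdvd2 : (p : Zsqrtd c) ∣ ((star z) ^ (q - 1) - 1) := by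
    rw [← Ideal.mem_span_singleton (α := Zsqrtd c), ← hI]
    rw [← Ideal.Quotient.eq_zero_iff_mem]
    rw [map_sub, map_pow, map_one, ← hf, hone, sub_self]
  -- apply star
  obtain ⟨w, hw⟩ := hdvd2
  refine ⟨star w, ?_⟩
  have := congrArg star hw
  simp only [star_sub, star_pow, star_star, star_one, star_mul'] at this
  rw [this]
  have : star ((p : Zsqrtd c)) = (p : Zsqrtd c) := by
    rw [show ((p : ℕ) : Zsqrtd c) = ((p : ℤ) : Zsqrtd c) from by push_cast; rfl]
    exact star_intCast _
  rw [this]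
end

section
/- Let n = pq be a Frobenius pseudoprime with parameters (a,b,c), where p is an odd prime with Jacobi symbol J(c/p) = +1 and z = a+b√c is a unit modulo p. Then z^{q+1} ≡ a² - b²c (mod p) in ℤ[√c]. -/
/-- Theorem 1(b): if n = pq is an FPP with parameters (a,b,c), p an odd prime with
J(c/p) = +1 and z = a+b√c a unit mod p, then z^(q+1) ≡ a² - b²c (mod p). -/
theorem stmt_4 (a b c : ℤ) (n p q : ℕ) (hn : IsFPP a b c n) (hpq : n = p * q)
    (hp : p.Prime) (hodd : Odd p) (hJ : jacobiSym c p = 1)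
    (hu : IsUnit (Ideal.Quotient.mk (Ideal.span {(p : Zsqrtd c)}) (⟨a, b⟩ : Zsqrtd c))) :
    (p : Zsqrtd c) ∣ ((⟨a, b⟩ : Zsqrtd c) ^ (q + 1) - ((a ^ 2 - b ^ 2 * c : ℤ) : Zsqrtd c)) := by
  obtain ⟨hn1, hnp, hnodd, hns, hcop, hsf, hJn, hdvd⟩ := hn
  haveI : Fact p.Prime := ⟨hp⟩
  set z : Zsqrtd c := ⟨a, b⟩ with hz
  -- p is a nonunit of ℤ√c
  have hnu : (p : Zsqrtd c) ∈ nonunits (Zsqrtd c) := by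
    intro h
    have h1 : ((p : ℤ) : Zsqrtd c) ∣ 1 := by push_cast; exact isUnit_iff_dvd_one.mp h
    have h2 := ((Zsqrtd.intCast_dvd (d := c) (p : ℤ) 1).mp h1).1
    simp only [Zsqrtd.re_one] at h2
    have h3 := Int.le_of_dvd one_pos h2
    have h4 := hp.two_le
    omega
  haveI hchar : CharP (Zsqrtd c ⧸ (Ideal.span ({(p : Zsqrtd c)} : Set (Zsqrtd c)))) p :=
    CharP.quotient (Zsqrtd c) p hnu
  set R := Zsqrtd c ⧸ (Ideal.span ({(p : Zsqrtd c)} : Set (Zsqrtd c)))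
  set f : Zsqrtd c →+* R := Ideal.Quotient.mk (Ideal.span ({(p : Zsqrtd c)} : Set (Zsqrtd c)))
  -- the cast from ZMod p
  set g : ZMod p →+* R := ZMod.castHom (dvd_refl p) R
  have hg_int : ∀ m : ℤ, g (m : ZMod p) = (m : R) := fun m => map_intCast g m
  -- Fermat: (m : R)^p = m for integer m
  have hferm : ∀ m : ℤ, (m : R) ^ p = (m : R) := by
    intro m
    rw [← hg_int m, ← map_pow, ZMod.pow_card, hg_int]
  -- Euler: (c : R)^(p/2) = 1
  have heuler : (c : R) ^ (p / 2) = 1 := by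
    have h1 : ((c : ZMod p)) ^ (p / 2) = ((legendreSym p c : ℤ) : ZMod p) :=
      (legendreSym.eq_pow p c).symm
    have h2 : legendreSym p c = 1 := by
      rw [jacobiSym.legendreSym.to_jacobiSym]; exact hJ
    rw [← hg_int c, ← map_pow, h1, h2]
    simp
  -- (f sqrtd)^p = f sqrtd
  have hs : (f Zsqrtd.sqrtd) ^ p = f Zsqrtd.sqrtd := by
    obtain ⟨k, hk⟩ := hodd
    have hk2 : p / 2 = k := by omega
    calc (f Zsqrtd.sqrtd) ^ p = ((f Zsqrtd.sqrtd) ^ 2) ^ (p / 2) * f Zsqrtd.sqrtd := by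
          rw [← pow_mul, ← pow_succ]
          congr 1
          omega
      _ = (c : R) ^ (p / 2) * f Zsqrtd.sqrtd := by
          rw [sq, ← map_mul, Zsqrtd.dmuld, map_intCast]
      _ = f Zsqrtd.sqrtd := by rw [heuler, one_mul]
  -- Frobenius fixes f z
  have hfz : (f z) ^ p = f z := by
    have hdec : z = (a : Zsqrtd c) + Zsqrtd.sqrtd * (b : Zsqrtd c) := Zsqrtd.decompose
    rw [hdec, map_add, map_mul, add_pow_char, mul_pow, hs]
    rw [map_intCast, map_intCast, hferm a, hferm b]
  -- z^n ≡ star z mod p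
  have hpn : (p : Zsqrtd c) ∣ (n : Zsqrtd c) := by
    have h0 : (p : ℤ) ∣ (n : ℤ) := by exact_mod_cast Dvd.intro q hpq.symm
    have h1 := (Zsqrtd.intCast_dvd_intCast (d := c) p n).mpr h0
    push_cast at h1
    exact h1
  have hzn : (f z) ^ n = f (star z) := by
    have : f (z ^ n - star z) = 0 := by
      rw [Ideal.Quotient.eq_zero_iff_mem, Ideal.mem_span_singleton]
      exact dvd_trans hpn hdvd
    rw [map_sub, sub_eq_zero, map_pow] at this
    exact this
  -- z^q ≡ star z mod p
  have hzq : (f z) ^ q = f (star z) := by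
    rw [← hzn, hpq, pow_mul, hfz]
  -- conclude
  rw [← Ideal.mem_span_singleton, ← Ideal.Quotient.eq_zero_iff_mem, map_sub, sub_eq_zero]
  show f (z ^ (q + 1)) = f _
  rw [map_pow, pow_succ, hzq, ← map_mul]
  congr 1
  have : star z * z = ((z.norm : ℤ) : Zsqrtd c) := by
    rw [Zsqrtd.norm_eq_mul_conj, mul_comm]
  rw [mul_comm] at this
  rw [show z * star z = star z * z from mul_comm _ _] at this
  rw [this]
  congr 1
  simp [Zsqrtd.norm_def, hz]
  ring
end

section
/- Let n = pq be a Frobenius pseudoprime with parameters (a,b,c), p prime with J(c/p) = -1, and z = a+b√c a unit in ℤ_p[√c]. Then q is coprime to the multiplicative order of z in ℤ_p[√c]*. -/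
set_option maxHeartbeats 1000000 in
/-- Corollary: if n = pq is an FPP with parameters (a,b,c), p prime with J(c/p) = -1,
and z = a+b√c a unit in ℤ_p[√c], then q is coprime to the multiplicative order of z
in ℤ_p[√c]. -/
theorem stmt_5 (a b c : ℤ) (n p q : ℕ) (hn : IsFPP a b c n) (hpq : n = p * q)
    (hp : p.Prime) (hJ : jacobiSym c p = -1)
    (hu : IsUnit (Ideal.Quotient.mk (Ideal.span {(p : Zsqrtd c)}) (⟨a, b⟩ : Zsqrtd c))) :
    Nat.Coprime q
      (orderOf (Ideal.Quotient.mk (Ideal.span {(p : Zsqrtd c)}) (⟨a, b⟩ : Zsqrtd c))) := by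
  obtain ⟨hn1, hnp, hodd, -, -, -, -, hdvd⟩ := hn
  haveI : Fact p.Prime := ⟨hp⟩
  set I : Ideal (Zsqrtd c) := Ideal.span {(p : Zsqrtd c)} with hI
  set mk := Ideal.Quotient.mk I with hmk
  -- p is not a unit in Zsqrtd c
  have hnu : (p : Zsqrtd c) ∈ nonunits (Zsqrtd c) := by
    intro h
    obtain ⟨u, hu'⟩ := isUnit_iff_exists_inv.mp h
    have : ((p : ℤ√c) * u).re = (1 : ℤ√c).re := by rw [hu']
    simp [Zsqrtd.re_mul] at this
    have : (p : ℤ) ∣ 1 := ⟨u.re, this.symm⟩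
    exact hp.not_dvd_one (by exact_mod_cast this)
  haveI : CharP (Zsqrtd c ⧸ I) p := CharP.quotient _ p hnu
  -- p odd
  have hpodd : Odd p := hp.odd_of_ne_two (by rintro rfl; exact (Nat.not_odd_iff_even.mpr ⟨q, by linarith [hpq]⟩) hodd)
  -- integer casts are fixed by ^p
  have hfix : ∀ x : ℤ, (x : Zsqrtd c ⧸ I) ^ p = x := by
    intro x
    have h1 : (p : ℤ) ∣ x ^ p - x := by
      have : ((x ^ p - x : ℤ) : ZMod p) = 0 := by push_cast [ZMod.pow_card]; ring
      exact_mod_cast (ZMod.intCast_zmod_eq_zero_iff_dvd _ p).mp this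
    obtain ⟨k, hk⟩ := h1
    have : ((x ^ p - x : ℤ) : Zsqrtd c ⧸ I) = 0 := by
      rw [hk]; push_cast [CharP.cast_eq_zero (Zsqrtd c ⧸ I) p]; ring
    push_cast at this
    linear_combination this
  -- c ^ (p/2) = -1 in the quotient
  have hc : ((c : Zsqrtd c ⧸ I)) ^ (p / 2) = -1 := by
    have h1 : ((c : ZMod p)) ^ (p / 2) = -1 := by
      rw [← legendreSym.eq_pow, jacobiSym.legendreSym.to_jacobiSym, hJ]; norm_num
    have h2 : (p : ℤ) ∣ c ^ (p / 2) + 1 := by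
      have : ((c ^ (p/2) + 1 : ℤ) : ZMod p) = 0 := by push_cast [h1]; ring
      exact_mod_cast (ZMod.intCast_zmod_eq_zero_iff_dvd _ p).mp this
    obtain ⟨k, hk⟩ := h2
    have : ((c ^ (p/2) + 1 : ℤ) : Zsqrtd c ⧸ I) = 0 := by
      rw [hk]; push_cast [CharP.cast_eq_zero (Zsqrtd c ⧸ I) p]; ring
    push_cast at this
    linear_combination this
  -- the Frobenius computation
  set s : Zsqrtd c ⧸ I := mk Zsqrtd.sqrtd with hs
  have hs2 : s * s = (c : Zsqrtd c ⧸ I) := by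
    rw [hs, ← map_mul, Zsqrtd.dmuld]; push_cast; rfl
  have hsp : s ^ p = -s := by
    obtain ⟨m, hm⟩ := hpodd
    have hm2 : p / 2 = m := by omega
    calc s ^ p = (s * s) ^ m * s := by rw [hm]; ring
    _ = (c : Zsqrtd c ⧸ I) ^ (p / 2) * s := by rw [hs2, hm2]
    _ = -s := by rw [hc]; ring
  have key : ∀ x y : ℤ, (mk (⟨x, y⟩ : Zsqrtd c)) ^ p = mk (⟨x, -y⟩ : Zsqrtd c) := by
    intro x y
    have hd : (⟨x, y⟩ : Zsqrtd c) = (x : Zsqrtd c) + Zsqrtd.sqrtd * (y : Zsqrtd c) :=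
      Zsqrtd.decompose
    have hd' : (⟨x, -y⟩ : Zsqrtd c) = (x : Zsqrtd c) + Zsqrtd.sqrtd * ((-y : ℤ) : Zsqrtd c) :=
      Zsqrtd.decompose
    rw [hd, hd', map_add, map_add, map_mul, map_mul, map_intCast, map_intCast, map_intCast,
      add_pow_char, mul_pow, hsp, hfix, hfix]
    push_cast
    ring
  set z := mk (⟨a, b⟩ : Zsqrtd c) with hz
  have hzp : z ^ p = mk (star (⟨a, b⟩ : Zsqrtd c)) := by
    rw [hz, key a b]; rfl
  have hzp2 : (z ^ p) ^ p = z := by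
    rw [hzp]
    have : star (⟨a, b⟩ : Zsqrtd c) = (⟨a, -b⟩ : Zsqrtd c) := rfl
    rw [this, key a (-b), neg_neg]
  -- z^n = z^p
  have hzn : z ^ n = z ^ p := by
    have hpn : (p : Zsqrtd c) ∣ (n : Zsqrtd c) := Nat.cast_dvd_cast ⟨q, hpq⟩
    have : mk ((⟨a, b⟩ : Zsqrtd c) ^ n - star (⟨a, b⟩ : Zsqrtd c)) = 0 :=
      Ideal.Quotient.eq_zero_iff_mem.mpr
        (Ideal.mem_span_singleton.mpr (hpn.trans hdvd))
    rw [map_sub, map_pow, sub_eq_zero] at this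
    rw [hz, this, hzp]
  -- q ≥ 2
  have hq2 : 2 ≤ q := by
    rcases q with _ | _ | q
    · omega
    · exfalso; apply hnp; rw [hpq]; simpa using hp
    · omega
  -- move to units
  obtain ⟨u, hu'⟩ := hu
  have hord : orderOf z = orderOf u := by rw [← hu', orderOf_units]
  have hun : u ^ n = u ^ p := Units.ext (by push_cast [hu']; exact hzn)
  have hup2 : (u ^ p) ^ p = u := Units.ext (by push_cast [hu']; exact hzp2)
  have h1 : orderOf u ∣ p * (q - 1) := by
    apply orderOf_dvd_of_pow_eq_one
    have : u ^ (p * (q - 1)) * u ^ p = u ^ p := by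
      rw [← pow_add]
      have h7 : p * (q - 1) + p = n := by
        rw [hpq, ← Nat.mul_succ]
        congr 1
        omega
      rw [h7, hun]
    exact mul_right_cancel (b := u ^ p) (by rw [one_mul]; exact this)
  have h2 : orderOf u ∣ p * p - 1 := by
    apply orderOf_dvd_of_pow_eq_one
    have : u ^ (p * p - 1) * u = u := by
      rw [← pow_succ]
      have h8 : p * p - 1 + 1 = p * p := Nat.succ_pred_eq_of_pos (Nat.mul_pos hp.pos hp.pos)
      rw [h8, pow_mul]; exact hup2
    exact mul_right_cancel (b := u) (by rw [one_mul]; exact this)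
  have hcop : Nat.Coprime (orderOf u) p := by
    have : Nat.Coprime p (p * p - 1) := by
      have h3 : Nat.gcd p (p * p - 1) ∣ 1 := by
        have ha : Nat.gcd p (p * p - 1) ∣ p * p := (Nat.gcd_dvd_left _ _).mul_right p
        have hb : Nat.gcd p (p * p - 1) ∣ p * p - 1 := Nat.gcd_dvd_right _ _
        have hd := Nat.dvd_sub ha hb
        have hpos : 0 < p * p := Nat.mul_pos hp.pos hp.pos
        have h4 : p * p - (p * p - 1) = 1 := by omega
        rwa [h4] at hd
      exact Nat.dvd_one.mp h3
    exact (Nat.Coprime.coprime_dvd_right h2 this).symm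
  have h5 : orderOf u ∣ q - 1 := hcop.dvd_of_dvd_mul_left h1
  rw [hord]
  have h6 : Nat.gcd q (orderOf u) ∣ 1 := by
    have ha : Nat.gcd q (orderOf u) ∣ q := Nat.gcd_dvd_left _ _
    have hb : Nat.gcd q (orderOf u) ∣ q - 1 := (Nat.gcd_dvd_right _ _).trans h5
    have := Nat.dvd_sub ha hb
    have h4 : q - (q - 1) = 1 := by omega
    rwa [h4] at this
  exact Nat.eq_one_of_dvd_one h6
end

section
/- Let z = a+b√c in ℤ[√c] and write z^k = a_k + b_k√c. If n = pq is a Frobenius pseudoprime with parameters (a,b,c), p prime, and J(c/p) = -1, then p divides gcd(a_{q-1} - 1, b_{q-1}). -/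
open Zsqrtd

set_option synthInstance.maxHeartbeats 1000000
set_option maxHeartbeats 1000000

lemma charP_quot (c : ℤ) (p : ℕ) :
    CharP (Zsqrtd c ⧸ Ideal.span {(p : Zsqrtd c)}) p := by
  constructor
  intro n
  rw [← map_natCast (Ideal.Quotient.mk _) n, Ideal.Quotient.eq_zero_iff_mem,
    Ideal.mem_span_singleton]
  have h1 : ((p : Zsqrtd c)) = ((p : ℤ) : Zsqrtd c) := by push_cast; ring
  have h2 : ((n : Zsqrtd c)) = ((n : ℤ) : Zsqrtd c) := by push_cast; ring
  rw [h1, h2, Zsqrtd.intCast_dvd_intCast]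
  exact_mod_cast Iff.rfl

lemma frob (c : ℤ) (p : ℕ) [Fact p.Prime] (hodd : p % 2 = 1)
    (hc : ((c : ZMod p)) ^ (p / 2) = -1) (w : Zsqrtd c) :
    (p : Zsqrtd c) ∣ w ^ p - star w := by
  haveI := charP_quot c p
  haveI : ExpChar (Zsqrtd c ⧸ Ideal.span {(p : Zsqrtd c)}) p :=
    ExpChar.prime Fact.out
  set φ := Ideal.Quotient.mk (Ideal.span {(p : Zsqrtd c)}) with hφ
  have key : ∀ x : Zsqrtd c, φ x = 0 ↔ (p : Zsqrtd c) ∣ x := fun x => by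
    rw [Ideal.Quotient.eq_zero_iff_mem, Ideal.mem_span_singleton]
  have hint : ∀ m : ℤ, (p : ℤ) ∣ m → φ (m : Zsqrtd c) = 0 := by
    intro m hm
    rw [key]
    have : ((p : ℤ) : Zsqrtd c) ∣ ((m : ℤ) : Zsqrtd c) := by
      rwa [Zsqrtd.intCast_dvd_intCast]
    simpa using this
  rw [← key, map_sub, map_pow, sub_eq_zero]
  -- Fermat for integers
  have fermat : ∀ m : ℤ, φ ((m : Zsqrtd c)) ^ p = φ ((m : Zsqrtd c)) := by
    intro m
    have h : (p : ℤ) ∣ m ^ p - m := by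
      have : ((m ^ p - m : ℤ) : ZMod p) = 0 := by
        push_cast
        rw [ZMod.pow_card]
        ring
      exact (ZMod.intCast_zmod_eq_zero_iff_dvd _ p).mp this
    have := hint _ h
    push_cast at this
    rw [map_sub, map_pow, sub_eq_zero] at this
    exact this
  -- sqrtd^p = -sqrtd in the quotient
  have hsq : φ (sqrtd : Zsqrtd c) ^ p = - φ (sqrtd : Zsqrtd c) := by
    have h : (p : ℤ) ∣ c ^ (p / 2) + 1 := by
      have : ((c ^ (p / 2) + 1 : ℤ) : ZMod p) = 0 := by
        push_cast
        rw [hc]; ring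
      exact (ZMod.intCast_zmod_eq_zero_iff_dvd _ p).mp this
    have h0 := hint _ h
    push_cast at h0
    rw [map_add, map_pow, map_one] at h0
    have hc' : φ (((c : ℤ) : Zsqrtd c)) ^ (p / 2) = -1 := by linear_combination h0
    have hs2 : φ (sqrtd : Zsqrtd c) ^ 2 = φ (((c : ℤ) : Zsqrtd c)) := by
      rw [← map_pow, sq, Zsqrtd.dmuld]
    calc φ (sqrtd : Zsqrtd c) ^ p
        = (φ (sqrtd) ^ 2) ^ (p / 2) * φ (sqrtd) := by
          rw [← pow_mul, ← pow_succ]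
          congr 1
          omega
      _ = - φ (sqrtd : Zsqrtd c) := by rw [hs2, hc']; ring
  -- now decompose w
  have hw : w = ((w.re : ℤ) : Zsqrtd c) + sqrtd * ((w.im : ℤ) : Zsqrtd c) := by
    exact_mod_cast Zsqrtd.decompose (d := c) (x := w.re) (y := w.im)
  have hstar : star w = ((w.re : ℤ) : Zsqrtd c) - sqrtd * ((w.im : ℤ) : Zsqrtd c) := by
    have h1 : star w = (⟨w.re, -w.im⟩ : Zsqrtd c) := rfl
    rw [h1, Zsqrtd.decompose]
    push_cast
    ring
  rw [hstar]
  conv_lhs => rw [hw]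
  rw [map_add, map_sub, map_mul, add_pow_char, mul_pow,
    fermat, fermat, hsq]
  ring

/-- Corollary 2.2(a): writing z^k = a_k + b_k √c, if n = pq is an FPP with parameters
(a,b,c), p prime and J(c/p) = -1, then p divides gcd(a_{q-1} - 1, b_{q-1}). -/
theorem stmt_6 (a b c : ℤ) (n p q : ℕ) (hn : IsFPP a b c n) (hpq : n = p * q)
    (hp : p.Prime) (hJ : jacobiSym c p = -1) :
    (p : ℤ) ∣ (Int.gcd (((⟨a, b⟩ : Zsqrtd c) ^ (q - 1)).re - 1)
      (((⟨a, b⟩ : Zsqrtd c) ^ (q - 1)).im) : ℤ) := by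
  obtain ⟨hn1, -, hodd, -, hcop, -, -, hdvd⟩ := hn
  haveI : Fact p.Prime := ⟨hp⟩
  set z : Zsqrtd c := ⟨a, b⟩ with hz
  have hq0 : q ≠ 0 := by rintro rfl; simp [hpq] at hn1
  obtain ⟨q', rfl⟩ : ∃ q', q = q' + 1 := ⟨q - 1, by omega⟩
  have hq1 : q' + 1 - 1 = q' := rfl
  have hpn : p ∣ n := ⟨q' + 1, hpq⟩
  have hp2 : p ≠ 2 := by
    rintro rfl
    rw [Nat.odd_iff] at hodd
    omega
  have hpodd : p % 2 = 1 := Nat.odd_iff.mp (hp.odd_of_ne_two hp2)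
  have hleg : legendreSym p c = -1 := by
    rw [jacobiSym.legendreSym.to_jacobiSym]; exact_mod_cast hJ
  have heul : ((c : ZMod p)) ^ (p / 2) = -1 := by
    have h := legendreSym.eq_pow p c
    rw [hleg] at h
    push_cast at h
    exact h.symm
  have hbn : IsCoprime b ((n : ℤ)) := hcop.of_mul_left_left.of_mul_left_right
  have hpdn : ((p : ℤ)) ∣ ((n : ℤ)) := Int.natCast_dvd_natCast.mpr hpn
  have hbp : IsCoprime b ((p : ℤ)) := hbn.of_isCoprime_of_dvd_right hpdn
  have hpInt : Prime ((p : ℤ)) := Nat.prime_iff_prime_int.mp hp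
  have hN : ¬ ((p : ℤ)) ∣ (a ^ 2 - c * b ^ 2) := by
    intro hdN
    have h0 : ((a : ZMod p)) ^ 2 = (c : ZMod p) * (b : ZMod p) ^ 2 := by
      have h1 : ((a ^ 2 - c * b ^ 2 : ℤ) : ZMod p) = 0 :=
        (ZMod.intCast_zmod_eq_zero_iff_dvd _ _).mpr hdN
      push_cast at h1
      linear_combination h1
    have hb0 : ((b : ℤ) : ZMod p) ≠ 0 := by
      intro hb0
      rw [ZMod.intCast_zmod_eq_zero_iff_dvd] at hb0
      exact hpInt.not_unit (hbp.isUnit_of_dvd' hb0 dvd_rfl)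
    have hsqc : IsSquare ((c : ZMod p)) := by
      refine ⟨(a : ZMod p) * ((b : ZMod p))⁻¹, ?_⟩
      have hb2 : (b : ZMod p) * ((b : ZMod p))⁻¹ = 1 := mul_inv_cancel₀ hb0
      linear_combination (-(((b : ZMod p))⁻¹)^2) * h0 +
        (-(c : ZMod p) * ((b : ZMod p) * ((b : ZMod p))⁻¹ + 1)) * hb2
    rw [legendreSym.eq_neg_one_iff] at hleg
    exact hleg hsqc
  have hNc : IsCoprime (a ^ 2 - c * b ^ 2) ((p : ℤ)) :=
    (hpInt.coprime_iff_not_dvd.mpr hN).symm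
  haveI := charP_quot c p
  set φ := Ideal.Quotient.mk (Ideal.span {(p : Zsqrtd c)}) with hφ
  have key : ∀ x : Zsqrtd c, φ x = 0 ↔ (p : Zsqrtd c) ∣ x := fun x => by
    rw [Ideal.Quotient.eq_zero_iff_mem, Ideal.mem_span_singleton]
  have hint : ∀ m : ℤ, (p : ℤ) ∣ m → φ (m : Zsqrtd c) = 0 := by
    intro m hm
    rw [key]
    have h : ((p : ℤ) : Zsqrtd c) ∣ ((m : ℤ) : Zsqrtd c) := by
      rwa [Zsqrtd.intCast_dvd_intCast]
    simpa using h
  have hNz : ((a ^ 2 - c * b ^ 2 : ℤ) : Zsqrtd c) = z * star z := by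
    rw [← Zsqrtd.norm_eq_mul_conj]
    congr 1
    simp [Zsqrtd.norm, hz]
    ring
  have hu : IsUnit (φ z) := by
    obtain ⟨u, v, huv⟩ := hNc
    have h1 : φ ((u * (a ^ 2 - c * b ^ 2) + v * p : ℤ) : Zsqrtd c) = 1 := by
      rw [huv]; simp
    rw [Int.cast_add, Int.cast_mul, Int.cast_mul] at h1
    rw [map_add, map_mul, map_mul, hNz, map_mul] at h1
    rw [hint ((p : ℤ)) dvd_rfl] at h1
    exact IsUnit.of_mul_eq_one (φ (star z) * φ ((u : ℤ) : Zsqrtd c))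
      (by linear_combination h1)
  have h1 : φ (z ^ n) = φ (star z) := by
    rw [← sub_eq_zero, ← map_sub, key]
    refine dvd_trans ?_ hdvd
    have h : ((p : ℤ) : Zsqrtd c) ∣ ((n : ℤ) : Zsqrtd c) := by
      rwa [Zsqrtd.intCast_dvd_intCast]
    simpa using h
  have h2 : φ (z ^ p) = φ (star z) := by
    rw [← sub_eq_zero, ← map_sub, key]
    exact frob c p hpodd heul z
  have h3 : (φ z ^ q') ^ p = 1 := by
    have hpow : φ z ^ n = φ z ^ p := by
      rw [← map_pow, ← map_pow, h1, h2]
    have hne : n = p + q' * p := by rw [hpq]; ring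
    rw [hne, pow_add] at hpow
    have hcalc : φ z ^ p * ((φ z ^ q') ^ p - 1) = 0 := by
      rw [← pow_mul]
      linear_combination hpow
    have h4 := ((hu.pow p).mul_right_eq_zero).mp hcalc
    linear_combination h4
  have h5 : φ (star (z ^ q')) = 1 := by
    have h6 : φ ((z ^ q') ^ p) = φ (star (z ^ q')) := by
      rw [← sub_eq_zero, ← map_sub, key]
      exact frob c p hpodd heul (z ^ q')
    rw [← h6, map_pow, map_pow, h3]
  have h6 : (p : Zsqrtd c) ∣ (star (z ^ q') - 1) := by
    rw [← key, map_sub, map_one, h5, sub_self]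
  have h7 : (p : Zsqrtd c) ∣ (z ^ q' - 1) := by
    obtain ⟨k, hk⟩ := h6
    refine ⟨star k, ?_⟩
    have h8 := congrArg star hk
    simpa [star_sub, star_mul, mul_comm] using h8
  have h9 : ((p : ℤ) : Zsqrtd c) ∣ (z ^ q' - 1) := by
    simpa using h7
  rw [Zsqrtd.intCast_dvd] at h9
  obtain ⟨h9a, h9b⟩ := h9
  simp only [Zsqrtd.re_sub, Zsqrtd.im_sub, Zsqrtd.re_one, Zsqrtd.im_one, sub_zero] at h9a h9b
  rw [hq1]
  exact Int.dvd_coe_gcd h9a h9b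
end

section
/- Let z = a+b√c in ℤ[√c] and write z^k = a_k + b_k√c. If n = pq is a Frobenius pseudoprime with parameters (a,b,c), p prime, and J(c/p) = +1, then p divides gcd(a_{q+1} - (a²-b²c), b_{q+1}). -/
/-- Corollary 2.2(b): writing z^k = a_k + b_k √c, if n = pq is an FPP with parameters
(a,b,c), p prime and J(c/p) = +1, then p divides gcd(a_{q+1} - (a²-b²c), b_{q+1}). -/
theorem stmt_7 (a b c : ℤ) (n p q : ℕ) (hn : IsFPP a b c n) (hpq : n = p * q)
    (hp : p.Prime) (hJ : jacobiSym c p = 1) :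
    (p : ℤ) ∣ (Int.gcd (((⟨a, b⟩ : Zsqrtd c) ^ (q + 1)).re - (a ^ 2 - b ^ 2 * c))
      (((⟨a, b⟩ : Zsqrtd c) ^ (q + 1)).im) : ℤ) := by
  obtain ⟨hn1, hnp, hodd, hnsq, hcop, hsf, hJn, hdvd⟩ := hn
  haveI : Fact p.Prime := ⟨hp⟩
  set z : Zsqrtd c := ⟨a, b⟩ with hz
  have hpnat : p ∣ n := ⟨q, hpq⟩
  have hc0 : (c : ZMod p) ≠ 0 := by
    intro h
    rw [ZMod.intCast_zmod_eq_zero_iff_dvd] at h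
    exact (Int.prime_iff_natAbs_prime.mpr (by simpa using hp)).not_unit
      (hcop.isUnit_of_dvd' (h.mul_left _) (Int.natCast_dvd_natCast.mpr hpnat))
  have hsq : IsSquare (c : ZMod p) := by
    rw [← legendreSym.eq_one_iff p hc0, jacobiSym.legendreSym.to_jacobiSym]; exact hJ
  obtain ⟨r, hr⟩ := hsq
  have hr0 : r ≠ 0 := by rintro rfl; simp at hr; exact hc0 hr
  have hp2 : p ≠ 2 := by
    rintro rfl
    obtain ⟨k, hk⟩ := hodd
    omega
  have h2 : (2 : ZMod p) ≠ 0 := by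
    have : ((2 : ℕ) : ZMod p) ≠ 0 := by
      rw [Ne, ZMod.natCast_eq_zero_iff]
      exact fun h => hp2 ((Nat.prime_dvd_prime_iff_eq hp Nat.prime_two).mp h)
    simpa using this
  -- p divides z^n - star z in ℤ√c
  have hpz : (p : Zsqrtd c) ∣ z ^ n - star z := by
    refine dvd_trans ?_ hdvd
    exact ⟨(q : Zsqrtd c), by rw [hpq]; push_cast; ring⟩
  have key : ∀ s : ZMod p, s * s = (c : ZMod p) →
      ((a : ZMod p) + b * s) ^ (q + 1) = (a : ZMod p) ^ 2 - b ^ 2 * c := by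
    intro s hs
    set f : Zsqrtd c →+* ZMod p := Zsqrtd.lift ⟨s, hs⟩ with hf
    have hfz : f z = (a : ZMod p) + b * s := by simp [hf, hz]
    have hfp : f (p : Zsqrtd c) = 0 := by
      rw [map_natCast, ZMod.natCast_self]
    have hmain : ((a : ZMod p) + b * s) ^ n = (a : ZMod p) - b * s := by
      obtain ⟨w, hw⟩ := hpz
      have := congrArg f hw
      rw [map_sub, map_pow, map_mul, hfp, zero_mul, hfz] at this
      have hstar : f (star z) = (a : ZMod p) - b * s := by
        simp [hf, hz, Zsqrtd.star_mk]
        ring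
      rw [hstar] at this
      linear_combination this
    have hfrob : ((a : ZMod p) + b * s) ^ n = ((a : ZMod p) + b * s) ^ q := by
      rw [hpq, pow_mul']
      exact ZMod.pow_card _
    rw [hfrob] at hmain
    calc ((a : ZMod p) + b * s) ^ (q + 1)
        = ((a : ZMod p) + b * s) ^ q * ((a : ZMod p) + b * s) := by ring
      _ = ((a : ZMod p) - b * s) * ((a : ZMod p) + b * s) := by rw [hmain]
      _ = (a : ZMod p) ^ 2 - b ^ 2 * (s * s) := by ring
      _ = (a : ZMod p) ^ 2 - b ^ 2 * c := by rw [hs]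
  have hv : ∀ s : ZMod p, s * s = (c : ZMod p) →
      ((z ^ (q + 1)).re : ZMod p) + (z ^ (q + 1)).im * s
        = (a : ZMod p) ^ 2 - b ^ 2 * c := by
    intro s hs
    have : (Zsqrtd.lift ⟨s, hs⟩ : Zsqrtd c →+* ZMod p) (z ^ (q + 1))
        = ((a : ZMod p) + b * s) ^ (q + 1) := by
      simp [hz, map_pow]
    rw [key s hs] at this
    rw [← this]
    simp
  have hrp : r * r = (c : ZMod p) := hr.symm
  have hrm : (-r) * (-r) = (c : ZMod p) := by rw [neg_mul_neg]; exact hr.symm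
  have e1 := hv r hrp
  have e2 := hv (-r) hrm
  have hB : ((z ^ (q + 1)).im : ZMod p) = 0 := by
    have h2br : (2 : ZMod p) * ((z ^ (q + 1)).im : ZMod p) * r = 0 := by
      linear_combination e1 - e2
    rcases mul_eq_zero.mp h2br with h | h
    · rcases mul_eq_zero.mp h with h' | h'
      · exact absurd h' h2
      · exact h'
    · exact absurd h hr0
  have hA : ((z ^ (q + 1)).re : ZMod p) = (a : ZMod p) ^ 2 - b ^ 2 * c := by
    rw [hB, zero_mul, add_zero] at e1
    exact e1
  have dB : (p : ℤ) ∣ (z ^ (q + 1)).im := by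
    rwa [← ZMod.intCast_zmod_eq_zero_iff_dvd]
  have dA : (p : ℤ) ∣ (z ^ (q + 1)).re - (a ^ 2 - b ^ 2 * c) := by
    rw [← ZMod.intCast_zmod_eq_zero_iff_dvd]
    push_cast
    rw [hA]
    ring
  exact Int.dvd_coe_gcd dA dB
end

section
/- Let n be a Frobenius pseudoprime with parameters (a,b,c), p a prime divisor of n with J(c/p) = +1, q = n/p, and d ∈ ℤ_p with d² = c. Set w₁ = a+bd and w₂ = a-bd in ℤ_p* (both nonzero). Then w₁^q ≡ w₂ and w₂^q ≡ w₁ (mod p). -/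
/-- Auxiliary: if r² = c in ZMod p, p prime, p*q = n, and the FPP congruence holds,
then (a + b r)^q = a - b r. -/
lemma aux_pow (a b c : ℤ) (n p q : ℕ) (r : ZMod p) [Fact p.Prime]
    (hr : r * r = (c : ZMod p)) (hpq : n = p * q)
    (hdvd : (n : Zsqrtd c) ∣ ((⟨a, b⟩ : Zsqrtd c) ^ n - star (⟨a, b⟩ : Zsqrtd c))) :
    ((a : ZMod p) + b * r) ^ q = (a : ZMod p) - b * r := by
  set φ : Zsqrtd c →+* ZMod p := Zsqrtd.lift ⟨r, hr⟩ with hφ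
  obtain ⟨z, hz⟩ := hdvd
  have happ := congrArg φ hz
  have hn0 : φ ((n : Zsqrtd c)) = 0 := by
    have : ((n : ZMod p) : ZMod p) = 0 := by
      have : (p : ℕ) ∣ n := ⟨q, hpq⟩
      exact_mod_cast (ZMod.natCast_eq_zero_iff n p).mpr this
    simpa [hφ] using this
  have key : φ ((⟨a, b⟩ : Zsqrtd c) ^ n) = φ (star (⟨a, b⟩ : Zsqrtd c)) := by
    have := happ
    rw [map_mul, hn0, zero_mul, map_sub] at this
    exact sub_eq_zero.mp this
  have h1 : φ ((⟨a, b⟩ : Zsqrtd c)) = (a : ZMod p) + b * r := by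
    simp [hφ, Zsqrtd.lift]
  have h2 : φ (star (⟨a, b⟩ : Zsqrtd c)) = (a : ZMod p) - b * r := by
    have : (star (⟨a, b⟩ : Zsqrtd c)) = ⟨a, -b⟩ := rfl
    rw [this]
    simp [hφ, Zsqrtd.lift, sub_eq_add_neg]
  rw [map_pow, h1, h2] at key
  have hfrob : ((a : ZMod p) + b * r) ^ n = ((a : ZMod p) + b * r) ^ q := by
    rw [hpq, mul_comm, pow_mul, ZMod.pow_card]
  rw [hfrob] at key
  exact key

/-- Theorem 2.6 (swap part): if n = pq is an FPP with parameters (a,b,c), p prime with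
J(c/p) = +1, d² = c in ℤ_p, and w₁ = a+bd, w₂ = a-bd are nonzero in ℤ_p, then
w₁^q = w₂ and w₂^q = w₁ in ℤ_p. -/
theorem stmt_10 (a b c : ℤ) (n p q : ℕ) (d : ZMod p) (hn : IsFPP a b c n)
    (hp : p.Prime) (hpq : n = p * q) (hJ : jacobiSym c p = 1)
    (hd : d ^ 2 = (c : ZMod p))
    (hw1 : (a : ZMod p) + b * d ≠ 0) (hw2 : (a : ZMod p) - b * d ≠ 0) :
    ((a : ZMod p) + b * d) ^ q = (a : ZMod p) - b * d ∧
    ((a : ZMod p) - b * d) ^ q = (a : ZMod p) + b * d := by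
  haveI : Fact p.Prime := ⟨hp⟩
  have hdvd := hn.2.2.2.2.2.2.2
  have h1 := aux_pow a b c n p q d (by rw [← hd]; ring) hpq hdvd
  have h2 := aux_pow a b c n p q (-d) (by rw [← hd]; ring) hpq hdvd
  constructor
  · exact h1
  · have := h2
    simp only [mul_neg, ← sub_eq_add_neg, sub_neg_eq_add] at this
    convert this using 2 <;> ring
end

section
/- Let n be a Frobenius pseudoprime with parameters (a,b,c), p a prime divisor with J(c/p) = +1, d² = c in ℤ_p, w₁ = a+bd, w₂ = a-bd ∈ ℤ_p*. Then gcd(ord(w₁w₂, p), ord(w₁/w₂, p)) ≤ 2, where ord(x,p) is the multiplicative order of x modulo p. -/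
lemma pow_eq_of_dvd {c : ℤ} {n p : ℕ} [Fact p.Prime] (r : ZMod p)
    (hr : r * r = (c : ZMod p)) (hpn : p ∣ n) {a b : ℤ}
    (hdvd : (n : Zsqrtd c) ∣ ((⟨a, b⟩ : Zsqrtd c) ^ n - star (⟨a, b⟩ : Zsqrtd c))) :
    ((a : ZMod p) + b * r) ^ n = (a : ZMod p) - b * r := by
  let φ : Zsqrtd c →+* ZMod p := Zsqrtd.lift ⟨r, hr⟩
  obtain ⟨k, hk⟩ := hdvd
  have hφn : φ (n : Zsqrtd c) = 0 := by
    rw [map_natCast, ZMod.natCast_eq_zero_iff]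
    exact hpn
  have := congrArg φ hk
  rw [map_sub, map_mul, hφn, zero_mul, sub_eq_zero, map_pow] at this
  have hstar : star (⟨a, b⟩ : Zsqrtd c) = (⟨a, -b⟩ : Zsqrtd c) := rfl
  rw [hstar] at this
  simpa [φ, Zsqrtd.lift, sub_eq_add_neg] using this

/-- Theorem 2.6 (gcd part): if n is an FPP with parameters (a,b,c), p a prime divisor
with J(c/p) = +1, d² = c in ℤ_p, and w₁ = a+bd, w₂ = a-bd nonzero in ℤ_p, then
gcd(ord(w₁w₂, p), ord(w₁/w₂, p)) ≤ 2. -/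
theorem stmt_11 (a b c : ℤ) (n p : ℕ) [hp : Fact p.Prime] (d : ZMod p) (hn : IsFPP a b c n) (hpn : p ∣ n) (hJ : jacobiSym c p = 1)
    (hd : d ^ 2 = (c : ZMod p))
    (hw1 : (a : ZMod p) + b * d ≠ 0) (hw2 : (a : ZMod p) - b * d ≠ 0) :
    Nat.gcd (orderOf (((a : ZMod p) + b * d) * ((a : ZMod p) - b * d)))
      (orderOf (((a : ZMod p) + b * d) / ((a : ZMod p) - b * d))) ≤ 2 := by
  obtain ⟨hn1, -, hodd, -, -, -, -, hdvd⟩ := hn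
  set x := (a : ZMod p) + b * d with hx
  set y := (a : ZMod p) - b * d with hy
  have hd' : d * d = (c : ZMod p) := by rw [← sq]; exact hd
  have hd'' : (-d) * (-d) = (c : ZMod p) := by rw [neg_mul_neg]; exact hd'
  have h1 : x ^ n = y := pow_eq_of_dvd d hd' hpn hdvd
  have h2 : y ^ n = x := by
    have h := pow_eq_of_dvd (-d) hd'' hpn hdvd
    simp only [mul_neg, ← sub_eq_add_neg, sub_neg_eq_add] at h
    rw [hy, hx]; exact h
  -- (x*y)^(n-1) = 1
  have hxy : (x * y) ^ n = x * y := by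
    rw [mul_pow, h1, h2, mul_comm]
  have hord1 : orderOf (x * y) ∣ n - 1 := by
    apply orderOf_dvd_of_pow_eq_one
    have hn0 : n - 1 + 1 = n := by omega
    have : (x * y) ^ (n - 1) * (x * y) = 1 * (x * y) := by
      rw [← pow_succ, hn0, hxy, one_mul]
    exact mul_right_cancel₀ (mul_ne_zero hw1 hw2) this
  have hord2 : orderOf (x / y) ∣ n + 1 := by
    apply orderOf_dvd_of_pow_eq_one
    have hq : (x / y) ^ n = y / x := by rw [div_pow, h1, h2]
    rw [pow_succ, hq, div_mul_div_comm, mul_comm y x, div_self (mul_ne_zero hw1 hw2)]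
  have hg : Nat.gcd (orderOf (x * y)) (orderOf (x / y)) ∣ 2 := by
    have h1' : Nat.gcd (orderOf (x * y)) (orderOf (x / y)) ∣ n - 1 :=
      dvd_trans (Nat.gcd_dvd_left _ _) hord1
    have h2' : Nat.gcd (orderOf (x * y)) (orderOf (x / y)) ∣ n + 1 :=
      dvd_trans (Nat.gcd_dvd_right _ _) hord2
    have : Nat.gcd (orderOf (x * y)) (orderOf (x / y)) ∣ (n + 1) - (n - 1) :=
      Nat.dvd_sub h2' h1'
    have he : (n + 1) - (n - 1) = 2 := by omega
    rwa [he] at this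
  exact Nat.le_of_dvd (by norm_num) hg
end

section
/- Let n be a Frobenius pseudoprime with parameters (a,b,c), p a prime with J(c/p) = -1 and p^s dividing n (s ≥ 1), z = a+b√c. Then z^{p+1} ≡ a² - b²c (mod p^s), equivalently z^p ≡ z̄ (mod p^s). -/
namespace FPPAux

variable {c : ℤ}

lemma md_mul {M x x' y y' : Zsqrtd c} (h1 : M ∣ x - x') (h2 : M ∣ y - y') :
    M ∣ x * y - x' * y' := by
  have h : x * y - x' * y' = (x - x') * y + x' * (y - y') := by ring
  rw [h]; exact dvd_add (h1.mul_right y) (h2.mul_left x')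

lemma md_pow {M x y : Zsqrtd c} (h : M ∣ x - y) (k : ℕ) : M ∣ x ^ k - y ^ k :=
  h.trans (sub_dvd_pow_sub_pow x y k)

lemma md_gcd {M z : Zsqrtd c} :
    ∀ A B : ℕ, M ∣ z ^ A - 1 → M ∣ z ^ B - 1 → M ∣ z ^ Nat.gcd A B - 1 := by
  intro A B
  induction A, B using Nat.gcd.induction with
  | H0 B => intro _ hB; simpa using hB
  | H1 A B hA ih =>
    intro h1 h2
    rw [Nat.gcd_rec]
    refine ih ?_ h1
    have hq : M ∣ (z ^ A) ^ (B / A) - 1 := by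
      simpa using md_pow h1 (B / A)
    have h3 : M ∣ z ^ B - z ^ (B % A) := by
      have heq : z ^ (B % A) * (z ^ A) ^ (B / A) = z ^ B := by
        rw [← pow_mul, ← pow_add, Nat.mod_add_div]
      have h4 := hq.mul_left (z ^ (B % A))
      rw [mul_sub, mul_one, heq] at h4
      exact h4
    have heq2 : z ^ (B % A) - 1 = (z ^ B - 1) - (z ^ B - z ^ (B % A)) := by ring
    rw [heq2]; exact dvd_sub h2 h3

lemma star_mul_self (a b : ℤ) :
    star (⟨a, b⟩ : Zsqrtd c) * (⟨a, b⟩ : Zsqrtd c) = ((a ^ 2 - b ^ 2 * c : ℤ) : Zsqrtd c) := by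
  have hcast : ((a ^ 2 - b ^ 2 * c : ℤ) : Zsqrtd c) = ⟨a ^ 2 - b ^ 2 * c, 0⟩ := by
    ext <;> simp only [Zsqrtd.re_intCast, Zsqrtd.im_intCast]
  rw [hcast, Zsqrtd.star_mk]
  ext <;> simp [Zsqrtd.re_mul, Zsqrtd.im_mul] <;> ring

lemma cancel {a b : ℤ} {m : ℕ} (hco : IsCoprime ((m : ℤ)) (a ^ 2 - b ^ 2 * c))
    {y : Zsqrtd c} (h : ((m : ℕ) : Zsqrtd c) ∣ (⟨a, b⟩ : Zsqrtd c) * y) :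
    ((m : ℕ) : Zsqrtd c) ∣ y := by
  have hc1 : ((m : ℕ) : Zsqrtd c) = ((m : ℤ) : Zsqrtd c) := by push_cast; ring
  have h2 : ((m : ℤ) : Zsqrtd c) ∣ ((a ^ 2 - b ^ 2 * c : ℤ) : Zsqrtd c) * y := by
    rw [← star_mul_self a b, mul_assoc]
    rw [hc1] at h
    exact h.mul_left _
  rw [Zsqrtd.intCast_dvd] at h2
  rw [Zsqrtd.re_smul, Zsqrtd.im_smul] at h2
  rw [hc1, Zsqrtd.intCast_dvd]
  exact ⟨hco.dvd_of_dvd_mul_left h2.1, hco.dvd_of_dvd_mul_left h2.2⟩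

lemma cancel_pow {a b : ℤ} {m : ℕ} (hco : IsCoprime ((m : ℤ)) (a ^ 2 - b ^ 2 * c))
    {y : Zsqrtd c} (k : ℕ) (h : ((m : ℕ) : Zsqrtd c) ∣ (⟨a, b⟩ : Zsqrtd c) ^ k * y) :
    ((m : ℕ) : Zsqrtd c) ∣ y := by
  induction k with
  | zero => simpa using h
  | succ k ih =>
    apply ih
    apply cancel hco
    have heq : (⟨a, b⟩ : Zsqrtd c) * ((⟨a, b⟩ : Zsqrtd c) ^ k * y)
        = (⟨a, b⟩ : Zsqrtd c) ^ (k + 1) * y := by ring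
    rw [heq]; exact h

lemma lift_step {p : ℕ} {w : Zsqrtd c} {t : ℕ} (ht : 1 ≤ t)
    (h : (p : Zsqrtd c) ^ t ∣ w - 1) : (p : Zsqrtd c) ^ (t + 1) ∣ w ^ p - 1 := by
  obtain ⟨u, hu⟩ := h
  have hw : w = (p : Zsqrtd c) ^ t * u + 1 := by
    have h1 : w - 1 = (p : Zsqrtd c) ^ t * u := hu
    have := sub_eq_iff_eq_add.mp h1
    exact this
  set x : Zsqrtd c := (p : Zsqrtd c) ^ t * u with hx
  have h1 : w ^ p = ∑ k ∈ Finset.range (p + 1), x ^ k * (p.choose k : Zsqrtd c) := by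
    rw [hw, add_pow]
    simp
  have h2 : w ^ p - 1 = ∑ i ∈ Finset.range p, x ^ (i + 1) * (p.choose (i + 1) : Zsqrtd c) := by
    rw [h1, Finset.sum_range_succ']
    simp
  rw [h2]
  apply Finset.dvd_sum
  intro i _
  rcases Nat.eq_zero_or_pos i with h0 | h0
  · subst h0
    simp only [zero_add, pow_one, Nat.choose_one_right]
    have heq : x * (p : Zsqrtd c) = (p : Zsqrtd c) ^ (t + 1) * u := by
      rw [hx]; ring
    rw [heq]
    exact Dvd.intro u rfl
  · have hx2 : (p : Zsqrtd c) ^ (t + 1) ∣ x ^ 2 := by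
      rw [hx, mul_pow, ← pow_mul]
      exact ((pow_dvd_pow (p : Zsqrtd c) (by omega)).mul_right _)
    exact ((hx2.trans (pow_dvd_pow x (by omega))).mul_right _)

lemma lift_iter {p : ℕ} {w : Zsqrtd c} (h : (p : Zsqrtd c) ∣ w - 1) :
    ∀ j : ℕ, (p : Zsqrtd c) ^ (1 + j) ∣ w ^ (p ^ j) - 1 := by
  intro j
  induction j with
  | zero =>
    have e1 : 1 + 0 = 1 := rfl
    have e2 : p ^ 0 = 1 := rfl
    rw [e1, e2, pow_one, pow_one]
    exact h
  | succ j ih =>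
    have step := lift_step (by omega) ih
    have heq : (w ^ p ^ j) ^ p = w ^ p ^ (j + 1) := by
      rw [← pow_mul, pow_succ]
    rw [heq] at step
    have : 1 + (j + 1) = (1 + j) + 1 := by ring
    rw [this]
    exact step

/-- Frobenius mod p: z^p ≡ star z (mod p), when c^(p/2) ≡ -1 mod p and p odd. -/
lemma frob {a b : ℤ} {p : ℕ} (hp : p.Prime) (hodd : p % 2 = 1)
    (heuler : (p : ℤ) ∣ c ^ (p / 2) + 1) :
    (p : Zsqrtd c) ∣ (⟨a, b⟩ : Zsqrtd c) ^ p - star (⟨a, b⟩ : Zsqrtd c) := by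
  haveI := Fact.mk hp
  set I : Ideal (Zsqrtd c) := Ideal.span {(p : Zsqrtd c)} with hI
  set φ := Ideal.Quotient.mk I with hφ
  have hdvd_iff : ∀ x y : Zsqrtd c, (p : Zsqrtd c) ∣ x - y → φ x = φ y := by
    intro x y hxy
    rw [Ideal.Quotient.eq, hI]
    exact (Ideal.mem_span_singleton).mpr hxy
  -- nontrivial quotient
  haveI : Nontrivial (Zsqrtd c ⧸ I) := by
    apply Ideal.Quotient.nontrivial_iff.mpr
    rw [hI, Ne, Ideal.span_singleton_eq_top]
    intro hunit
    have h1 : (p : Zsqrtd c) ∣ 1 := hunit.dvd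
    have h2 : ((p : ℤ) : Zsqrtd c) ∣ ((1 : ℤ) : Zsqrtd c) := by push_cast; exact_mod_cast h1
    rw [Zsqrtd.intCast_dvd_intCast] at h2
    have h3 := Int.eq_one_of_dvd_one (by positivity) h2
    have h4 := hp.two_le
    omega
  haveI : CharP (Zsqrtd c ⧸ I) p := by
    rw [CharP.charP_iff_prime_eq_zero hp, ← map_natCast (Ideal.Quotient.mk I) p,
      Ideal.Quotient.eq_zero_iff_mem, hI]
    exact Ideal.mem_span_singleton_self _
  -- int Fermat: φ (↑(m) ^ p) = φ ↑m
  have hfermat : ∀ m : ℤ, φ ((m : Zsqrtd c) ^ p) = φ ((m : Zsqrtd c)) := by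
    intro m
    apply hdvd_iff
    have h1 : (p : ℤ) ∣ m ^ p - m := by
      have := ZMod.intCast_zmod_eq_zero_iff_dvd (m ^ p - m) p
      rw [← this]
      push_cast
      rw [ZMod.pow_card]
      ring
    have h2 : ((p : ℤ) : Zsqrtd c) ∣ ((m ^ p - m : ℤ) : Zsqrtd c) :=
      (Zsqrtd.intCast_dvd_intCast (d := c) _ _).mpr h1
    push_cast at h2 ⊢
    convert h2 using 1
  -- sqrt c
  set r : Zsqrtd c := ⟨0, 1⟩ with hr
  have hdecomp : (⟨a, b⟩ : Zsqrtd c) = (a : Zsqrtd c) + (b : Zsqrtd c) * r := by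
    ext <;> simp [hr, Zsqrtd.re_mul, Zsqrtd.im_mul]
  have hstar : star (⟨a, b⟩ : Zsqrtd c) = (a : Zsqrtd c) - (b : Zsqrtd c) * r := by
    rw [Zsqrtd.star_mk]
    ext <;> simp [hr, Zsqrtd.re_mul, Zsqrtd.im_mul]
  have hr2 : r * r = (c : Zsqrtd c) := by
    ext <;> simp [hr, Zsqrtd.re_mul, Zsqrtd.im_mul]
  have hrp : r ^ p = (c : Zsqrtd c) ^ (p / 2) * r := by
    have hpeq : p = 2 * (p / 2) + 1 := by omega
    conv_lhs => rw [hpeq]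
    rw [pow_add, pow_one, pow_mul, pow_two, hr2]
  have heuler' : φ ((c : Zsqrtd c) ^ (p / 2)) = φ (-1) := by
    apply hdvd_iff
    have h2 : ((p : ℤ) : Zsqrtd c) ∣ ((c ^ (p / 2) + 1 : ℤ) : Zsqrtd c) :=
      (Zsqrtd.intCast_dvd_intCast (d := c) _ _).mpr heuler
    push_cast at h2 ⊢
    exact h2
  have key : φ ((⟨a, b⟩ : Zsqrtd c) ^ p - star (⟨a, b⟩ : Zsqrtd c)) = 0 := by
    rw [map_sub, hstar, hdecomp, map_pow, map_add, map_mul, map_sub, map_mul,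
      add_pow_char, mul_pow, ← map_pow, ← map_pow, ← map_pow, hfermat a, hfermat b,
      hrp, map_mul, heuler']
    simp only [map_neg, map_one]
    ring
  rw [← Ideal.mem_span_singleton, ← hI, ← Ideal.Quotient.eq_zero_iff_mem]
  exact key

end FPPAux



/-- Theorem 2.9: if n is an FPP with parameters (a,b,c), p prime with J(c/p) = -1 and
p^s ∣ n (s ≥ 1), z = a+b√c, then z^(p+1) ≡ a²-b²c (mod p^s), equivalently
z^p ≡ z̄ (mod p^s). -/
theorem stmt_14 (a b c : ℤ) (n p s : ℕ) (hn : IsFPP a b c n) (hp : p.Prime)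
    (hs : 1 ≤ s) (hps : p ^ s ∣ n) (hJ : jacobiSym c p = -1) :
    ((p ^ s : ℕ) : Zsqrtd c) ∣
      ((⟨a, b⟩ : Zsqrtd c) ^ (p + 1) - ((a ^ 2 - b ^ 2 * c : ℤ) : Zsqrtd c)) ∧
    ((p ^ s : ℕ) : Zsqrtd c) ∣ ((⟨a, b⟩ : Zsqrtd c) ^ p - star (⟨a, b⟩ : Zsqrtd c)) := by
  obtain ⟨hn1, hnprime, hodd, -, hcop, -, -, hFPP⟩ := hn
  haveI := Fact.mk hp
  have hpn : p ∣ n := (dvd_pow_self p (by omega : s ≠ 0)).trans hps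
  have h2n : n % 2 = 1 := Nat.odd_iff.mp hodd
  have hp2 : p % 2 = 1 := by
    rcases hp.eq_two_or_odd with h | h
    · subst h; obtain ⟨k, hk⟩ := hpn; omega
    · exact h
  -- coprimality facts
  have hpnZ : ((p : ℕ) : ℤ) ∣ ((n : ℕ) : ℤ) := Int.natCast_dvd_natCast.mpr hpn
  have hcp : IsCoprime (a * b * c) ((p : ℕ) : ℤ) := hcop.of_isCoprime_of_dvd_right hpnZ
  have hpP : Prime ((p : ℕ) : ℤ) := Nat.prime_iff_prime_int.mp hp
  have hpb : ¬ ((p : ℕ) : ℤ) ∣ b := by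
    intro hdvd
    have hu : IsUnit ((p : ℕ) : ℤ) :=
      (hcp.of_mul_left_left.of_mul_left_right).isUnit_of_dvd' hdvd dvd_rfl
    rw [Int.isUnit_iff] at hu
    have := hp.two_le
    omega
  -- Legendre symbol facts
  have hleg : legendreSym p c = -1 := by rw [jacobiSym.legendreSym.to_jacobiSym]; exact hJ
  have hNdvd : ¬ ((p : ℕ) : ℤ) ∣ (a ^ 2 - b ^ 2 * c) := by
    intro hdvd
    have hb0 : (b : ZMod p) ≠ 0 := by
      rw [Ne, ZMod.intCast_zmod_eq_zero_iff_dvd]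
      exact hpb
    have h0 : ((a ^ 2 - b ^ 2 * c : ℤ) : ZMod p) = 0 :=
      (ZMod.intCast_zmod_eq_zero_iff_dvd _ p).mpr hdvd
    push_cast at h0
    have hsq : IsSquare ((c : ℤ) : ZMod p) := by
      refine ⟨(a : ZMod p) * ((b : ZMod p))⁻¹, ?_⟩
      field_simp
      first
      | linear_combination h0
      | linear_combination -h0
    exact ((legendreSym.eq_neg_one_iff p).mp hleg) hsq
  have hcoN : ∀ t : ℕ, IsCoprime ((p ^ t : ℕ) : ℤ) (a ^ 2 - b ^ 2 * c) := by
    intro t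
    have h1 : IsCoprime (((p : ℕ) : ℤ) ^ t) (a ^ 2 - b ^ 2 * c) :=
      ((hpP.coprime_iff_not_dvd).mpr hNdvd).pow_left
    have : ((p ^ t : ℕ) : ℤ) = ((p : ℕ) : ℤ) ^ t := by push_cast; ring
    rw [this]
    exact h1
  -- Euler's criterion
  have heuler : ((p : ℕ) : ℤ) ∣ c ^ (p / 2) + 1 := by
    have hpow := legendreSym.eq_pow p c
    rw [hleg] at hpow
    have h0 : ((c ^ (p / 2) + 1 : ℤ) : ZMod p) = 0 := by
      push_cast
      rw [← hpow]
      push_cast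
      ring
    exact (ZMod.intCast_zmod_eq_zero_iff_dvd _ p).mp h0
  -- mod p^s : z^n ≡ star z
  have hzn : ((p ^ s : ℕ) : Zsqrtd c) ∣ (⟨a, b⟩ : Zsqrtd c) ^ n - star (⟨a, b⟩ : Zsqrtd c) :=
    (Nat.cast_dvd_cast hps).trans hFPP
  have hconj : ((p ^ s : ℕ) : Zsqrtd c) ∣ (star (⟨a, b⟩ : Zsqrtd c)) ^ n - (⟨a, b⟩ : Zsqrtd c) := by
    have h := map_dvd (starRingEnd (Zsqrtd c)) hzn
    simpa [starRingEnd_apply, star_sub, star_pow, star_star, star_natCast] using h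
  have hB : ((p ^ s : ℕ) : Zsqrtd c) ∣ (⟨a, b⟩ : Zsqrtd c) ^ (n * n) - (⟨a, b⟩ : Zsqrtd c) := by
    have h1 := FPPAux.md_pow hzn n
    rw [← pow_mul] at h1
    have h2 := dvd_add h1 hconj
    rw [sub_add_sub_cancel] at h2
    exact h2
  have hnn1 : 1 ≤ n * n := Nat.one_le_iff_ne_zero.mpr (by positivity)
  have hB1 : ((p ^ s : ℕ) : Zsqrtd c) ∣ (⟨a, b⟩ : Zsqrtd c) ^ (n * n - 1) - 1 := by
    apply FPPAux.cancel (hcoN s)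
    have heq : (⟨a, b⟩ : Zsqrtd c) * ((⟨a, b⟩ : Zsqrtd c) ^ (n * n - 1) - 1)
        = (⟨a, b⟩ : Zsqrtd c) ^ (n * n) - (⟨a, b⟩ : Zsqrtd c) := by
      rw [mul_sub, mul_one, ← pow_succ']
      congr 2
      omega
    rw [heq]
    exact hB
  -- mod p : z^(n-p) ≡ 1
  have hfrob : ((p : ℕ) : Zsqrtd c) ∣ (⟨a, b⟩ : Zsqrtd c) ^ p - star (⟨a, b⟩ : Zsqrtd c) :=
    FPPAux.frob hp hp2 heuler
  have hznp : ((p : ℕ) : Zsqrtd c) ∣ (⟨a, b⟩ : Zsqrtd c) ^ n - star (⟨a, b⟩ : Zsqrtd c) :=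
    (Nat.cast_dvd_cast hpn).trans hFPP
  have hnp_lt : p < n := by
    have h1 : p ≤ n := Nat.le_of_dvd (by omega) hpn
    rcases h1.lt_or_eq with h | h
    · exact h
    · exact absurd (h ▸ hp) hnprime
  have hw1 : ((p : ℕ) : Zsqrtd c) ∣ (⟨a, b⟩ : Zsqrtd c) ^ (n - p) - 1 := by
    have hcoN1 : IsCoprime ((p : ℕ) : ℤ) (a ^ 2 - b ^ 2 * c) :=
      (hpP.coprime_iff_not_dvd).mpr hNdvd
    apply FPPAux.cancel_pow hcoN1 p
    have heq : (⟨a, b⟩ : Zsqrtd c) ^ p * ((⟨a, b⟩ : Zsqrtd c) ^ (n - p) - 1)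
        = (⟨a, b⟩ : Zsqrtd c) ^ n - (⟨a, b⟩ : Zsqrtd c) ^ p := by
      rw [mul_sub, mul_one, ← pow_add]
      congr 2
      omega
    rw [heq]
    have h3 := dvd_sub hznp hfrob
    have heq2 : ((⟨a, b⟩ : Zsqrtd c) ^ n - star (⟨a, b⟩ : Zsqrtd c))
        - ((⟨a, b⟩ : Zsqrtd c) ^ p - star (⟨a, b⟩ : Zsqrtd c))
        = (⟨a, b⟩ : Zsqrtd c) ^ n - (⟨a, b⟩ : Zsqrtd c) ^ p := by ring
    rw [heq2] at h3
    exact h3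
  -- lift to mod p^s
  have hA : ((p : ℕ) : Zsqrtd c) ^ s ∣ (⟨a, b⟩ : Zsqrtd c) ^ ((n - p) * p ^ (s - 1)) - 1 := by
    have h := FPPAux.lift_iter hw1 (s - 1)
    rw [← pow_mul] at h
    have hse : 1 + (s - 1) = s := by omega
    rw [hse] at h
    exact h
  have hMeq : ((p ^ s : ℕ) : Zsqrtd c) = ((p : ℕ) : Zsqrtd c) ^ s := by push_cast; ring
  rw [hMeq] at hB1 hzn
  -- gcd argument
  have hgcd : ((p : ℕ) : Zsqrtd c) ^ s ∣
      (⟨a, b⟩ : Zsqrtd c) ^ (Nat.gcd ((n - p) * p ^ (s - 1)) (n * n - 1)) - 1 :=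
    FPPAux.md_gcd _ _ hA hB1
  have hpg : ¬ p ∣ Nat.gcd ((n - p) * p ^ (s - 1)) (n * n - 1) := by
    intro hdvd
    have h1 : p ∣ n * n - 1 := hdvd.trans (Nat.gcd_dvd_right _ _)
    have h2 : p ∣ n * n := hpn.mul_right n
    have h3 := Nat.dvd_sub h2 h1
    rw [Nat.sub_sub_self hnn1] at h3
    have := hp.one_lt
    have := Nat.dvd_one.mp h3
    omega
  have hgnp : Nat.gcd ((n - p) * p ^ (s - 1)) (n * n - 1) ∣ n - p := by
    have hco : Nat.Coprime (Nat.gcd ((n - p) * p ^ (s - 1)) (n * n - 1)) (p ^ (s - 1)) :=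
      Nat.Coprime.pow_right _ (Nat.coprime_comm.mp ((hp.coprime_iff_not_dvd).mpr hpg))
    exact hco.dvd_of_dvd_mul_right (Nat.gcd_dvd_left _ _)
  obtain ⟨m, hm⟩ := hgnp
  have hfin : ((p : ℕ) : Zsqrtd c) ^ s ∣ (⟨a, b⟩ : Zsqrtd c) ^ (n - p) - 1 := by
    have h := FPPAux.md_pow hgcd m
    rw [← pow_mul, ← hm, one_pow] at h
    exact h
  have hgoal2 : ((p : ℕ) : Zsqrtd c) ^ s ∣
      (⟨a, b⟩ : Zsqrtd c) ^ p - star (⟨a, b⟩ : Zsqrtd c) := by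
    have h1 : ((p : ℕ) : Zsqrtd c) ^ s ∣ (⟨a, b⟩ : Zsqrtd c) ^ n - (⟨a, b⟩ : Zsqrtd c) ^ p := by
      have heq : (⟨a, b⟩ : Zsqrtd c) ^ n - (⟨a, b⟩ : Zsqrtd c) ^ p
          = (⟨a, b⟩ : Zsqrtd c) ^ p * ((⟨a, b⟩ : Zsqrtd c) ^ (n - p) - 1) := by
        rw [mul_sub, mul_one, ← pow_add]
        congr 2
        omega
      rw [heq]
      exact hfin.mul_left _
    have h2 := dvd_sub hzn h1
    have heq2 : ((⟨a, b⟩ : Zsqrtd c) ^ n - star (⟨a, b⟩ : Zsqrtd c))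
        - ((⟨a, b⟩ : Zsqrtd c) ^ n - (⟨a, b⟩ : Zsqrtd c) ^ p)
        = (⟨a, b⟩ : Zsqrtd c) ^ p - star (⟨a, b⟩ : Zsqrtd c) := by ring
    rw [heq2] at h2
    exact h2
  rw [hMeq]
  constructor
  · have heq : (⟨a, b⟩ : Zsqrtd c) ^ (p + 1) - ((a ^ 2 - b ^ 2 * c : ℤ) : Zsqrtd c)
        = ((⟨a, b⟩ : Zsqrtd c) ^ p - star (⟨a, b⟩ : Zsqrtd c)) * (⟨a, b⟩ : Zsqrtd c) := by
      rw [← FPPAux.star_mul_self a b]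
      ring
    rw [heq]
    exact hgoal2.mul_right _
  · exact hgoal2
end

section
/- If n is a Frobenius pseudoprime with parameters (a,b,c), then n is a Fermat pseudoprime to the base N = a² - b²c mod n, i.e., N^{n-1} ≡ 1 (mod n) (equivalently N^n ≡ N mod n), assuming N is invertible mod n. -/
/-- If n is an FPP with parameters (a,b,c) and N = a²-b²c is invertible mod n,
then n is a Fermat pseudoprime to base N: N^(n-1) ≡ 1 (mod n). -/
theorem stmt_16 (a b c : ℤ) (n : ℕ) (hn : IsFPP a b c n)
    (hN : IsCoprime (a ^ 2 - b ^ 2 * c) (n : ℤ)) :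
    (n : ℤ) ∣ ((a ^ 2 - b ^ 2 * c) ^ (n - 1) - 1) := by
  obtain ⟨hn1, -, -, -, -, -, -, hdvd⟩ := hn
  set z : Zsqrtd c := ⟨a, b⟩ with hz
  have hdvd' : ((n : ℤ) : Zsqrtd c) ∣ (z ^ n - star z) := by exact_mod_cast hdvd
  rw [Zsqrtd.intCast_dvd] at hdvd'
  obtain ⟨hre, him⟩ := hdvd'
  have hre' : (z ^ n).re ≡ (star z).re [ZMOD (n : ℤ)] :=
    Int.ModEq.symm (Int.modEq_iff_dvd.mpr (by simpa [Zsqrtd.re_sub] using hre))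
  have him' : (z ^ n).im ≡ (star z).im [ZMOD (n : ℤ)] :=
    Int.ModEq.symm (Int.modEq_iff_dvd.mpr (by simpa [Zsqrtd.im_sub] using him))
  have hnorm : (z ^ n).norm ≡ (star z).norm [ZMOD (n : ℤ)] := by
    rw [Zsqrtd.norm_def, Zsqrtd.norm_def]
    have := (hre'.mul hre').sub ((Int.ModEq.refl c).mul (him'.mul him'))
    simpa [mul_assoc] using this
  have hzn : z.norm = a ^ 2 - b ^ 2 * c := by
    rw [Zsqrtd.norm_def]; ring
  have hsn : (star z).norm = a ^ 2 - b ^ 2 * c := by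
    rw [Zsqrtd.norm_def]; simp [hz, Zsqrtd.re_star, Zsqrtd.im_star]; ring
  have hpow : (z ^ n).norm = z.norm ^ n := by
    exact map_pow Zsqrtd.normMonoidHom z n
  rw [hpow, hzn, hsn] at hnorm
  set N := a ^ 2 - b ^ 2 * c
  have key : (n : ℤ) ∣ N * (N ^ (n - 1) - 1) := by
    have : N * (N ^ (n - 1) - 1) = N ^ n - N := by
      rw [mul_sub, mul_one, ← pow_succ']
      congr 2
      omega
    rw [this]
    exact (Int.ModEq.dvd hnorm.symm)
  exact (hN.symm).dvd_of_dvd_mul_left key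
end
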